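/- arXiv:2202.01446 — 3 statements merged into one kernel-verified Lean document; each statement's English description precedes it below -/
import Mathlib

section
/- Let p ∈ (0,1/2), let T ∈ [−1, 0], and let ε ≥ 0 with π₁ = 1/2 + ε ≤ 1 and π₂ = 1/2 − ε. Then π₁·ρ(T) + π₂·ρ(−T) ≤ 0, where ρ(x) = (1−p)·log(1+(1−2p)x) + p·log(1−(1−2p)x). -/
open Real

/-- For `p ∈ (0,1/2)`, `T ∈ [-1,0]`, `ε ≥ 0` with `π₁ = 1/2 + ε ≤ 1` and
`π₂ = 1/2 - ε`, we have `π₁ ρ(T) + π₂ ρ(-T) ≤ 0`. -/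
theorem stmt_6 (p T ε : ℝ) (hp0 : 0 < p) (hp : p < 1/2)
    (hT1 : -1 ≤ T) (hT0 : T ≤ 0) (hε : 0 ≤ ε) (hπ : 1/2 + ε ≤ 1) :
    (1/2 + ε) * ((1 - p) * Real.log (1 + (1 - 2*p) * T)
        + p * Real.log (1 - (1 - 2*p) * T))
      + (1/2 - ε) * ((1 - p) * Real.log (1 + (1 - 2*p) * (-T))
        + p * Real.log (1 - (1 - 2*p) * (-T))) ≤ 0 := by
  set c : ℝ := 1 - 2*p with hc
  have hc0 : 0 < c := by simp [hc]; linarith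
  have hc1 : c < 1 := by simp [hc]; linarith
  set a : ℝ := c * T with ha
  have ha0 : a ≤ 0 := mul_nonpos_of_nonneg_of_nonpos hc0.le hT0
  have ha1 : -1 < a := by nlinarith
  have e1 : 1 + c * (-T) = 1 - a := by ring
  have e2 : 1 - c * (-T) = 1 + a := by ring
  rw [e1, e2]
  set L1 := Real.log (1 + a) with hL1
  set L2 := Real.log (1 - a) with hL2
  have h1 : L1 ≤ 0 := Real.log_nonpos (by linarith) (by linarith)
  have h2 : 0 ≤ L2 := Real.log_nonneg (by linarith)
  have h3 : L1 + L2 ≤ 0 := by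
    rw [hL1, hL2, ← Real.log_mul (by linarith) (by linarith)]
    exact Real.log_nonpos (by nlinarith) (by nlinarith)
  have hs : 0 ≤ ε * c := mul_nonneg hε hc0.le
  nlinarith [mul_nonneg hs (neg_nonneg.mpr h1), mul_nonneg hs h2]
end

section
/- For any p ∈ (0,1/2), the inequality (1/2)·log₂(1/(1/2 + √(p(1−p)))) < (1/2)·(1 − H(p)) holds, where H(p) = −p·log₂ p − (1−p)·log₂(1−p). -/
open Real

/-- For `p ∈ (0,1/2)`: `(1/2) log₂(1/(1/2 + √(p(1-p)))) < (1/2)(1 - H(p))`. -/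
theorem stmt_9 (p : ℝ) (hp0 : 0 < p) (hp : p < 1/2) :
    (1/2) * Real.logb 2 (1 / (1/2 + Real.sqrt (p * (1 - p)))) <
      (1/2) * (1 - (-(p * Real.logb 2 p) - (1 - p) * Real.logb 2 (1 - p))) := by
  set q : ℝ := 1 - p with hqdef
  have hq0 : 0 < q := by simp only [hqdef]; linarith
  have hsp : 0 < Real.sqrt p := Real.sqrt_pos.2 hp0
  have hsq : 0 < Real.sqrt q := Real.sqrt_pos.2 hq0
  have hpq1 : p + q = 1 := by simp [hqdef]
  have hltsqrt : Real.sqrt p < Real.sqrt q :=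
    Real.sqrt_lt_sqrt hp0.le (by simp only [hqdef]; linarith)
  have hne : (Real.sqrt p)⁻¹ ≠ (Real.sqrt q)⁻¹ := by
    intro h
    exact hltsqrt.ne (by rw [← inv_inv (Real.sqrt p), h, inv_inv])
  have key := strictConcaveOn_log_Ioi.2 (Set.mem_Ioi.2 (inv_pos.2 hsp))
      (Set.mem_Ioi.2 (inv_pos.2 hsq)) hne hp0 hq0 hpq1
  simp only [smul_eq_mul] at key
  have hmulp : p * (Real.sqrt p)⁻¹ = Real.sqrt p := by
    rw [← Real.mul_self_sqrt hp0.le]; field_simp; rw [Real.sqrt_sq hsp.le]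
  have hmulq : q * (Real.sqrt q)⁻¹ = Real.sqrt q := by
    rw [← Real.mul_self_sqrt hq0.le]; field_simp; rw [Real.sqrt_sq hsq.le]
  rw [hmulp, hmulq, Real.log_inv, Real.log_inv, Real.log_sqrt hp0.le,
    Real.log_sqrt hq0.le] at key
  -- key : p * -(log p / 2) + q * -(log q / 2) < log (√p + √q)
  have hg0 : (0:ℝ) < 1/2 + Real.sqrt (p * q) := by positivity
  have hsq2 : (Real.sqrt p + Real.sqrt q)^2 = 2 * (1/2 + Real.sqrt (p * q)) := by
    have h1 : Real.sqrt p * Real.sqrt q = Real.sqrt (p * q) :=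
      (Real.sqrt_mul hp0.le q).symm
    have h2 : Real.sqrt p ^ 2 = p := Real.sq_sqrt hp0.le
    have h3 : Real.sqrt q ^ 2 = q := Real.sq_sqrt hq0.le
    nlinarith [h1, h2, h3]
  have hlogg : Real.log (Real.sqrt p + Real.sqrt q) =
      (Real.log 2 + Real.log (1/2 + Real.sqrt (p * q))) / 2 := by
    have this : Real.log ((Real.sqrt p + Real.sqrt q) ^ 2) =
        2 * Real.log (Real.sqrt p + Real.sqrt q) := by
      rw [Real.log_pow]; norm_num
    rw [hsq2, Real.log_mul (by norm_num) hg0.ne'] at this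
    have h0 : (0:ℝ) < Real.sqrt p + Real.sqrt q := by positivity
    linarith [this]
  rw [hlogg] at key
  -- key : p * -(log p / 2) + q * -(log q / 2) < (log 2 + log g)/2
  have hmain : -Real.log (1/2 + Real.sqrt (p * q)) <
      Real.log 2 + p * Real.log p + q * Real.log q := by linarith
  have hl2 : (0:ℝ) < Real.log 2 := Real.log_pos one_lt_two
  simp only [Real.logb]
  rw [Real.log_div one_ne_zero hg0.ne', Real.log_one, zero_sub]
  rw [show (1:ℝ)/2 * (-Real.log (1/2 + Real.sqrt (p * q)) / Real.log 2) =
      (-Real.log (1/2 + Real.sqrt (p * q))) / (2 * Real.log 2) by ring]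
  rw [div_lt_iff₀ (by positivity)]
  have hexp : 1/2 * (1 - (-(p * (Real.log p / Real.log 2)) -
      q * (Real.log q / Real.log 2))) * (2 * Real.log 2) =
      Real.log 2 + p * Real.log p + q * Real.log q := by
    field_simp
    ring
  rw [hexp]
  exact hmain
end

section
/- Let p ∈ (0,1/2), and let q ∈ (0,1), τ ∈ [−1,1] with 1+(1−2p)τ > 0, q' = q·2p/(1+(1−2p)τ), and suppose 1 − τ − 2q ≥ 0. Then log₂(q'/(1−q')) − log₂(q/(1−q)) ≥ −log₂((1−p)/p). -/
open Real

/-- One unfavorable BZ update decreases the log-likelihood ratio by at most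
`log₂((1-p)/p)`, provided the true interval lies right of the query point:
`1 - τ - 2q ≥ 0`. -/
theorem stmt_16 (p q q' τ : ℝ) (hp0 : 0 < p) (hp : p < 1/2)
    (hq0 : 0 < q) (hq1 : q < 1) (hτ1 : -1 ≤ τ) (hτ2 : τ ≤ 1)
    (hden : 0 < 1 + (1 - 2*p) * τ)
    (hq' : q' = q * (2 * p) / (1 + (1 - 2*p) * τ))
    (hmass : 0 ≤ 1 - τ - 2*q) :
    -(Real.logb 2 ((1 - p) / p)) ≤
      Real.logb 2 (q' / (1 - q')) - Real.logb 2 (q / (1 - q)) := by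
  set D := 1 + (1 - 2*p) * τ with hD
  have hp1 : p < 1 := by linarith
  have h2p : 0 < 1 - 2*p := by linarith
  have hDq : 0 < D - 2*p*q := by nlinarith
  have hq'0 : 0 < q' := by
    rw [hq']; positivity
  have hq'1 : q' < 1 := by
    rw [hq', div_lt_one hden]; nlinarith
  -- rewrite -(logb 2 ((1-p)/p)) as logb 2 (p/(1-p))
  have e1 : -(Real.logb 2 ((1 - p) / p)) = Real.logb 2 (p / (1 - p)) := by
    rw [← Real.logb_inv, inv_div]
  have hm : Real.logb 2 (p / (1 - p) * (q / (1 - q))) =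
      Real.logb 2 (p / (1 - p)) + Real.logb 2 (q / (1 - q)) :=
    Real.logb_mul (ne_of_gt (div_pos hp0 (by linarith))) (ne_of_gt (div_pos hq0 (by linarith)))
  have key : Real.logb 2 (p / (1 - p) * (q / (1 - q))) ≤
      Real.logb 2 (q' / (1 - q')) := by
    apply Real.logb_le_logb_of_le one_lt_two (mul_pos (div_pos hp0 (by linarith)) (div_pos hq0 (by linarith)))
    have h1q' : 1 - q' = (D - 2*p*q) / D := by
      rw [hq']; field_simp
    have hrw : q * (2*p) / D / ((D - 2*p*q) / D) = q * (2*p) / (D - 2*p*q) := by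
      rw [div_div_div_cancel_right₀]
      exact ne_of_gt hden
    rw [h1q', hq', hrw, div_mul_div_comm, div_le_div_iff₀ (mul_pos (by linarith : (0:ℝ) < 1 - p) (by linarith : (0:ℝ) < 1 - q)) hDq]
    nlinarith [mul_nonneg (le_of_lt h2p) hmass, mul_pos hq0 h2p,
      mul_pos hp0 hq0]
  linarith [key, hm, e1]
end
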